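/- Let m, n ∈ ℕ and let p be a monic polynomial of degree m with complex coefficients satisfying I_0(x^k p(x) e^{−x³}) + I_2(x^k p(x) e^{−x³}) = 0 for all 0 ≤ k ≤ m−1. Then I_0(x^k Q_n[p](x) e^{−x³}) + I_2(x^k Q_n[p](x) e^{−x³}) = 0 for all 0 ≤ k ≤ n+m−1. (Together with the degree and monicity of Q_n[p] and its orthogonality on Γ_0 ∪ Γ_1, this is the Rodrigues formula: Q_n[p] is the type II multiple orthogonal polynomial P_{n,n+m} for the exponential cubic weight.) -/

import Mathlib

/-- The primitive third root of unity `ω = exp(2πi/3)`. -/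
noncomputable def ω : ℂ := Complex.exp (2 * Real.pi * Complex.I / 3)

/-- Integral over the ray `Γ₀ = [0,∞)`. -/
noncomputable def I0 (f : ℂ → ℂ) : ℂ := ∫ t in Set.Ioi (0 : ℝ), f t

/-- Integral over the ray `Γ₁ = ω·[0,∞)`, oriented towards the origin. -/
noncomputable def I1 (f : ℂ → ℂ) : ℂ := -ω * ∫ t in Set.Ioi (0 : ℝ), f (ω * t)

/-- Integral over the ray `Γ₂ = ω²·[0,∞)`, oriented towards the origin. -/
noncomputable def I2 (f : ℂ → ℂ) : ℂ := -ω ^ 2 * ∫ t in Set.Ioi (0 : ℝ), f (ω ^ 2 * t)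

/-- `Q n p x = (−1)ⁿ 3⁻ⁿ e^{x³} (d/dx)ⁿ (e^{−x³} p(x))`. -/
noncomputable def Q (n : ℕ) (p : Polynomial ℂ) : ℂ → ℂ := fun x =>
  (-1) ^ n / 3 ^ n * Complex.exp (x ^ 3) *
    iteratedDeriv n (fun z => Complex.exp (-z ^ 3) * p.eval z) x

open MeasureTheory Polynomial Filter Set

lemma omega_pow_three : ω ^ 3 = 1 := by
  rw [ω, ← Complex.exp_nat_mul]
  rw [show ((3:ℕ) : ℂ) * (2 * Real.pi * Complex.I / 3) = 2 * Real.pi * Complex.I by push_cast; ring]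
  exact Complex.exp_two_pi_mul_I

lemma integrable_pow_cexp (i : ℕ) :
    IntegrableOn (fun t : ℝ => (t : ℂ) ^ i * Complex.exp (-(t : ℂ) ^ 3)) (Ioi 0) := by
  have hre : IntegrableOn (fun t : ℝ => t ^ (i : ℝ) * Real.exp (-t ^ (3 : ℝ))) (Ioi 0) :=
    integrableOn_rpow_mul_exp_neg_rpow (neg_one_lt_zero.trans_le (Nat.cast_nonneg i)) (by norm_num)
  have h2 : IntegrableOn (fun t : ℝ => ((t ^ i * Real.exp (-t ^ 3) : ℝ) : ℂ)) (Ioi 0) := by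
    refine Integrable.ofReal (hre.congr_fun (fun t ht => ?_) measurableSet_Ioi)
    rw [← Real.rpow_natCast t i, ← Real.rpow_natCast t 3]
    norm_cast
  refine h2.congr_fun (fun t ht => ?_) measurableSet_Ioi
  push_cast [Complex.ofReal_exp]
  ring_nf

lemma integrable_poly_cexp (s : Polynomial ℂ) :
    IntegrableOn (fun t : ℝ => Complex.exp (-(t : ℂ) ^ 3) * s.eval (t : ℂ)) (Ioi 0) := by
  have h : IntegrableOn (fun t : ℝ =>
      ∑ i ∈ Finset.range (s.natDegree + 1),
        s.coeff i * ((t : ℂ) ^ i * Complex.exp (-(t : ℂ) ^ 3))) (Ioi 0) := by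
    apply integrable_finset_sum
    intro i _
    exact (integrable_pow_cexp i).const_mul _
  refine h.congr_fun (fun t ht => ?_) measurableSet_Ioi
  rw [Polynomial.eval_eq_sum_range, Finset.mul_sum]
  rw [Finset.sum_congr rfl]
  intro i _
  ring

lemma integrable_poly_cexp_ray (c : ℂ) (hc : c ^ 3 = 1) (s : Polynomial ℂ) :
    IntegrableOn (fun t : ℝ => Complex.exp (-(c * t) ^ 3) * s.eval (c * t)) (Ioi 0) := by
  have := integrable_poly_cexp (s.comp (Polynomial.C c * Polynomial.X))
  refine this.congr_fun (fun t ht => ?_) measurableSet_Ioi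
  simp only [Polynomial.eval_comp, Polynomial.eval_mul, Polynomial.eval_C, Polynomial.eval_X]
  rw [mul_pow, hc, one_mul]

lemma tendsto_pow_cexp (i : ℕ) :
    Tendsto (fun t : ℝ => (t : ℂ) ^ i * Complex.exp (-(t : ℂ) ^ 3)) atTop (nhds 0) := by
  rw [tendsto_zero_iff_norm_tendsto_zero]
  have heq : ∀ᶠ t : ℝ in atTop, ‖(t : ℂ) ^ i * Complex.exp (-(t : ℂ) ^ 3)‖ = t ^ i * Real.exp (-t ^ 3) := by
    filter_upwards [eventually_ge_atTop (0:ℝ)] with t ht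
    rw [norm_mul, norm_pow, Complex.norm_real, Real.norm_eq_abs, abs_of_nonneg ht,
      show -(t:ℂ)^3 = ((-t^3 : ℝ) : ℂ) by push_cast; ring]
    rw [Complex.norm_exp]
    norm_cast
  rw [tendsto_congr' heq]
  have hb : ∀ᶠ t : ℝ in atTop, t ^ i * Real.exp (-t ^ 3) ≤ t ^ i * Real.exp (-t) := by
    filter_upwards [eventually_ge_atTop (1:ℝ)] with t ht
    have h1 : t ≤ t ^ 3 := le_self_pow₀ ht three_ne_zero
    exact mul_le_mul_of_nonneg_left (Real.exp_le_exp.2 (by linarith)) (by positivity)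
  have h0 : ∀ᶠ t : ℝ in atTop, 0 ≤ t ^ i * Real.exp (-t ^ 3) := by
    filter_upwards [eventually_ge_atTop (0:ℝ)] with t ht
    positivity
  exact squeeze_zero' h0 hb (Real.tendsto_pow_mul_exp_neg_atTop_nhds_zero i)

lemma tendsto_poly_cexp (s : Polynomial ℂ) :
    Tendsto (fun t : ℝ => Complex.exp (-(t : ℂ) ^ 3) * s.eval (t : ℂ)) atTop (nhds 0) := by
  have h : Tendsto (fun t : ℝ =>
      ∑ i ∈ Finset.range (s.natDegree + 1),
        s.coeff i * ((t : ℂ) ^ i * Complex.exp (-(t : ℂ) ^ 3))) atTop (nhds 0) := by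
    rw [show (0:ℂ) = ∑ i ∈ Finset.range (s.natDegree + 1), s.coeff i * 0 by simp]
    exact tendsto_finset_sum _ (fun i _ => ((tendsto_pow_cexp i).const_mul _))
  refine h.congr (fun t => ?_)
  rw [Polynomial.eval_eq_sum_range, Finset.mul_sum]
  rw [Finset.sum_congr rfl]
  intro i _
  ring

lemma tendsto_poly_cexp_ray (c : ℂ) (hc : c ^ 3 = 1) (s : Polynomial ℂ) :
    Tendsto (fun t : ℝ => Complex.exp (-(c * t) ^ 3) * s.eval (c * t)) atTop (nhds 0) := by
  have := tendsto_poly_cexp (s.comp (Polynomial.C c * Polynomial.X))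
  refine this.congr (fun t => ?_)
  simp only [Polynomial.eval_comp, Polynomial.eval_mul, Polynomial.eval_C, Polynomial.eval_X]
  rw [mul_pow, hc, one_mul]

lemma hasDerivAt_cexp_poly (r : Polynomial ℂ) (z : ℂ) :
    HasDerivAt (fun z : ℂ => Complex.exp (-z ^ 3) * r.eval z)
      (Complex.exp (-z ^ 3) *
        (Polynomial.derivative r - Polynomial.C 3 * Polynomial.X ^ 2 * r).eval z) z := by
  have h1 : HasDerivAt (fun z : ℂ => Complex.exp (-z ^ 3))
      (Complex.exp (-z ^ 3) * -(3 * z ^ 2)) z := by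
    have := ((hasDerivAt_pow 3 z).neg).cexp
    simpa using this
  have h2 := r.hasDerivAt z
  have := h1.mul h2
  refine this.congr_deriv ?_
  simp only [Polynomial.eval_sub, Polynomial.eval_mul, Polynomial.eval_C, Polynomial.eval_pow,
    Polynomial.eval_X]
  ring

lemma ftc_ray (c : ℂ) (hc : c ^ 3 = 1) (r : Polynomial ℂ) :
    ∫ t in Ioi (0:ℝ), c * (Complex.exp (-(c * t) ^ 3) *
      (Polynomial.derivative r - Polynomial.C 3 * Polynomial.X ^ 2 * r).eval (c * t)) =
      -(r.eval 0) := by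
  set s := Polynomial.derivative r - Polynomial.C 3 * Polynomial.X ^ 2 * r with hs
  have hderiv : ∀ x : ℝ, HasDerivAt (fun t : ℝ => Complex.exp (-(c * t) ^ 3) * r.eval (c * t))
      (c * (Complex.exp (-(c * x) ^ 3) * s.eval (c * x))) x := by
    intro x
    have h1 : HasDerivAt (fun z : ℂ => Complex.exp (-(c * z) ^ 3) * r.eval (c * z))
        (Complex.exp (-(c * (x:ℂ)) ^ 3) * s.eval (c * x) * c) (x : ℂ) := by
      have hinner : HasDerivAt (fun z : ℂ => c * z) c (x : ℂ) := by
        simpa using (hasDerivAt_id (x:ℂ)).const_mul c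
      exact (hasDerivAt_cexp_poly r (c * x)).comp (x:ℂ) hinner
    have := h1.comp_ofReal
    simpa [mul_comm] using this
  have hcont : ContinuousWithinAt (fun t : ℝ => Complex.exp (-(c * t) ^ 3) * r.eval (c * t))
      (Ici (0:ℝ)) 0 := (hderiv 0).continuousAt.continuousWithinAt
  have hint : IntegrableOn (fun t : ℝ => c * (Complex.exp (-(c * t) ^ 3) * s.eval (c * t)))
      (Ioi (0:ℝ)) := (integrable_poly_cexp_ray c hc s).const_mul c
  have htend : Tendsto (fun t : ℝ => Complex.exp (-(c * t) ^ 3) * r.eval (c * t)) atTop (nhds 0) :=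
    tendsto_poly_cexp_ray c hc r
  have := MeasureTheory.integral_Ioi_of_hasDerivAt_of_tendsto hcont
    (fun x _ => hderiv x) hint htend
  rw [this]
  simp

lemma omega_sq_cube : (ω ^ 2) ^ 3 = 1 := by
  rw [← pow_mul, show 2 * 3 = 3 * 2 by ring, pow_mul, omega_pow_three, one_pow]

lemma core (r : Polynomial ℂ) :
    I0 (fun z => Complex.exp (-z ^ 3) *
        (Polynomial.derivative r - Polynomial.C 3 * Polynomial.X ^ 2 * r).eval z) +
      I2 (fun z => Complex.exp (-z ^ 3) *
        (Polynomial.derivative r - Polynomial.C 3 * Polynomial.X ^ 2 * r).eval z) = 0 := by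
  set s := Polynomial.derivative r - Polynomial.C 3 * Polynomial.X ^ 2 * r with hs
  have h0 : I0 (fun z => Complex.exp (-z ^ 3) * s.eval z) = -(r.eval 0) := by
    rw [I0, ← ftc_ray 1 (one_pow 3) r]
    refine setIntegral_congr_fun measurableSet_Ioi (fun t ht => ?_)
    rw [← hs]
    simp
  have h2 : I2 (fun z => Complex.exp (-z ^ 3) * s.eval z) = r.eval 0 := by
    rw [I2, neg_mul, neg_eq_iff_eq_neg, ← MeasureTheory.integral_const_mul,
      ← ftc_ray (ω ^ 2) omega_sq_cube r]
  rw [h0, h2]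
  ring

noncomputable def qs (p : Polynomial ℂ) : ℕ → Polynomial ℂ
  | 0 => p
  | (j+1) => Polynomial.derivative (qs p j) - Polynomial.C 3 * Polynomial.X ^ 2 * qs p j

lemma iteratedDeriv_eq (p : Polynomial ℂ) (j : ℕ) :
    iteratedDeriv j (fun z : ℂ => Complex.exp (-z ^ 3) * p.eval z) =
      fun x : ℂ => Complex.exp (-x ^ 3) * (qs p j).eval x := by
  induction j with
  | zero => simp [qs]
  | succ j ih =>
    rw [iteratedDeriv_succ, ih]
    funext x
    exact (hasDerivAt_cexp_poly (qs p j) x).deriv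

lemma poly_id (r : Polynomial ℂ) (k : ℕ) :
    Polynomial.X ^ k * (Polynomial.derivative r - Polynomial.C 3 * Polynomial.X ^ 2 * r) =
      (Polynomial.derivative (Polynomial.X ^ k * r)
        - Polynomial.C 3 * Polynomial.X ^ 2 * (Polynomial.X ^ k * r))
        - Polynomial.C (k : ℂ) * Polynomial.X ^ (k - 1) * r := by
  cases k with
  | zero => simp
  | succ k =>
    rw [Polynomial.derivative_mul, Polynomial.derivative_X_pow]
    simp only [Nat.add_sub_cancel]
    push_cast
    ring

lemma I0_sub_const_mul (A B : ℂ → ℂ) (c : ℂ)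
    (hA : IntegrableOn (fun t : ℝ => A t) (Ioi 0))
    (hB : IntegrableOn (fun t : ℝ => B t) (Ioi 0)) :
    I0 (fun x => A x - c * B x) = I0 A - c * I0 B := by
  unfold I0
  rw [← MeasureTheory.integral_const_mul]
  exact MeasureTheory.integral_sub hA (hB.const_mul c)

lemma I2_sub_const_mul (A B : ℂ → ℂ) (c : ℂ)
    (hA : IntegrableOn (fun t : ℝ => A (ω ^ 2 * t)) (Ioi 0))
    (hB : IntegrableOn (fun t : ℝ => B (ω ^ 2 * t)) (Ioi 0)) :
    I2 (fun x => A x - c * B x) = I2 A - c * I2 B := by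
  unfold I2
  rw [MeasureTheory.integral_sub hA (hB.const_mul c), MeasureTheory.integral_const_mul]
  ring

lemma main_ind (m : ℕ) (p : Polynomial ℂ)
    (horth : ∀ k : ℕ, k < m →
      I0 (fun x => Complex.exp (-x ^ 3) * ((Polynomial.X ^ k : Polynomial ℂ) * p).eval x) +
        I2 (fun x => Complex.exp (-x ^ 3) * ((Polynomial.X ^ k : Polynomial ℂ) * p).eval x) = 0) :
    ∀ j k : ℕ, k < j + m →
      I0 (fun x => Complex.exp (-x ^ 3) * ((Polynomial.X ^ k : Polynomial ℂ) * qs p j).eval x) +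
        I2 (fun x => Complex.exp (-x ^ 3) * ((Polynomial.X ^ k : Polynomial ℂ) * qs p j).eval x)
        = 0 := by
  intro j
  induction j with
  | zero => intro k hk; exact horth k (by simpa using hk)
  | succ j ih =>
    intro k hk
    set r := qs p j with hr
    have hq : qs p (j + 1) = Polynomial.derivative r - Polynomial.C 3 * Polynomial.X ^ 2 * r := rfl
    set A : ℂ → ℂ := fun x => Complex.exp (-x ^ 3) *
        (Polynomial.derivative (Polynomial.X ^ k * r)
          - Polynomial.C 3 * Polynomial.X ^ 2 * (Polynomial.X ^ k * r)).eval x with hA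
    set B : ℂ → ℂ := fun x => Complex.exp (-x ^ 3) *
        ((Polynomial.X ^ (k - 1) : Polynomial ℂ) * r).eval x with hB
    have hfun : (fun x : ℂ => Complex.exp (-x ^ 3) *
          ((Polynomial.X ^ k : Polynomial ℂ) * qs p (j + 1)).eval x)
        = fun x : ℂ => A x - (k : ℂ) * B x := by
      funext x
      rw [hA, hB, hq, poly_id]
      simp only [Polynomial.eval_sub, Polynomial.eval_mul, Polynomial.eval_C,
        Polynomial.eval_pow, Polynomial.eval_X]
      ring
    rw [hfun]
    have hA0 : IntegrableOn (fun t : ℝ => A t) (Ioi 0) := integrable_poly_cexp _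
    have hB0 : IntegrableOn (fun t : ℝ => B t) (Ioi 0) := integrable_poly_cexp _
    have hA2 : IntegrableOn (fun t : ℝ => A (ω ^ 2 * t)) (Ioi 0) :=
      integrable_poly_cexp_ray (ω ^ 2) omega_sq_cube _
    have hB2 : IntegrableOn (fun t : ℝ => B (ω ^ 2 * t)) (Ioi 0) :=
      integrable_poly_cexp_ray (ω ^ 2) omega_sq_cube _
    rw [I0_sub_const_mul A B (k : ℂ) hA0 hB0, I2_sub_const_mul A B (k : ℂ) hA2 hB2]
    have hcore : I0 A + I2 A = 0 := core (Polynomial.X ^ k * r)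
    rcases Nat.eq_zero_or_pos k with rfl | hkpos
    · simp only [Nat.cast_zero, zero_mul, sub_zero]
      exact hcore
    · have hBzero : I0 B + I2 B = 0 := ih (k - 1) (by omega)
      linear_combination hcore - (k : ℂ) * hBzero

lemma I0_const_mul (c : ℂ) (f : ℂ → ℂ) : I0 (fun x => c * f x) = c * I0 f := by
  unfold I0; exact MeasureTheory.integral_const_mul c _

lemma I2_const_mul (c : ℂ) (f : ℂ → ℂ) : I2 (fun x => c * f x) = c * I2 f := by
  unfold I2; rw [MeasureTheory.integral_const_mul]; ring

/-- **Rodrigues formula, orthogonality on `Γ₀ ∪ Γ₂`.** If `p` is a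
monic polynomial of degree `m` orthogonal to `xᵏ`, `k = 0,…,m−1`, for the weight
`e^{−x³}` on `Γ₀ ∪ Γ₂`, then `Qₙ[p]` is orthogonal to `xᵏ`, `k = 0,…,n+m−1`, for
the weight `e^{−x³}` on `Γ₀ ∪ Γ₂`. -/
theorem stmt5 (m n : ℕ) (p : Polynomial ℂ) (hmonic : p.Monic) (hdeg : p.natDegree = m)
    (horth : ∀ k : ℕ, k < m →
      I0 (fun x => x ^ k * p.eval x * Complex.exp (-x ^ 3)) +
        I2 (fun x => x ^ k * p.eval x * Complex.exp (-x ^ 3)) = 0) :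
    ∀ k : ℕ, k < n + m →
      I0 (fun x => x ^ k * Q n p x * Complex.exp (-x ^ 3)) +
        I2 (fun x => x ^ k * Q n p x * Complex.exp (-x ^ 3)) = 0 := by
  intro k hk
  have horth' : ∀ k : ℕ, k < m →
      I0 (fun x => Complex.exp (-x ^ 3) * ((Polynomial.X ^ k : Polynomial ℂ) * p).eval x) +
        I2 (fun x => Complex.exp (-x ^ 3) * ((Polynomial.X ^ k : Polynomial ℂ) * p).eval x)
        = 0 := by
    intro i hi
    have hfun : (fun x : ℂ => Complex.exp (-x ^ 3) *
        ((Polynomial.X ^ i : Polynomial ℂ) * p).eval x)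
        = fun x => x ^ i * p.eval x * Complex.exp (-x ^ 3) := by
      funext x
      simp only [Polynomial.eval_mul, Polynomial.eval_pow, Polynomial.eval_X]
      ring
    rw [hfun]
    exact horth i hi
  have hmain := main_ind m p horth' n k (by omega)
  have hQ : ∀ x : ℂ, Q n p x = (-1) ^ n / 3 ^ n * (qs p n).eval x := by
    intro x
    rw [Q, iteratedDeriv_eq]
    have hone : Complex.exp (x ^ 3) * Complex.exp (-x ^ 3) = 1 := by
      rw [← Complex.exp_add]; simp
    rw [mul_assoc, ← mul_assoc (Complex.exp (x ^ 3)) (Complex.exp (-x ^ 3)), hone, one_mul]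
  have hfun : (fun x : ℂ => x ^ k * Q n p x * Complex.exp (-x ^ 3)) =
      fun x => ((-1) ^ n / 3 ^ n : ℂ) *
        (Complex.exp (-x ^ 3) * ((Polynomial.X ^ k : Polynomial ℂ) * qs p n).eval x) := by
    funext x
    rw [hQ x]
    simp only [Polynomial.eval_mul, Polynomial.eval_pow, Polynomial.eval_X]
    ring
  rw [hfun, I0_const_mul, I2_const_mul]
  rw [← mul_add, hmain, mul_zero]
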